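/- arXiv:2110.15798 — 3 statements merged into one kernel-verified Lean document; each statement's English description precedes it below -/
import Mathlib

section
/- For every n ∈ ℕ there exists y ∈ B_S(n) such that γ_S(n) · Card(I_y) ≤ Card(D)², where I_y = y⁻¹D ∩ D. -/
open Set Filter

/-- The ball of radius `n` in the word metric: elements expressible as a product
of at most `n` elements of `S`. -/
def wordBall {G : Type*} [Group G] (S : Set G) (n : ℕ) : Set G :=
  {x | ∃ l : List G, l.length ≤ n ∧ (∀ s ∈ l, s ∈ S) ∧ l.prod = x}

/-- The growth function `γ_S(n) = Card(B_S(n))`. -/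
noncomputable def growth {G : Type*} [Group G] (S : Set G) (n : ℕ) : ℕ :=
  (wordBall S n).ncard

/-- The word norm `‖x‖_S`. -/
noncomputable def wordNorm {G : Type*} [Group G] (S : Set G) (x : G) : ℕ :=
  sInf {n | x ∈ wordBall S n}

/-- The reverse growth function `φ_S(t) = min {n | γ_S(n) ≥ t}`. -/
noncomputable def phiS {G : Type*} [Group G] (S : Set G) (t : ℝ) : ℕ :=
  sInf {n | t ≤ (growth S n : ℝ)}

/-- The interior boundary `∂_S D`. -/
def intBoundary {G : Type*} [Group G] (S : Set G) (D : Set G) : Set G :=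
  {x ∈ D | ∃ s ∈ S, s * x ∉ D}

/-- The exterior boundary `∂'_S D`. -/
def extBoundary {G : Type*} [Group G] (S : Set G) (D : Set G) : Set G :=
  {x | x ∉ D ∧ ∃ s ∈ S, s * x ∈ D}

theorem stmt_2 {G : Type*} [Group G] (S : Set G) (hSfin : S.Finite)
    (hSsym : ∀ s ∈ S, s⁻¹ ∈ S) (hSgen : Subgroup.closure S = ⊤)
    (D : Set G) (hDfin : D.Finite) (hDne : D.Nonempty) (n : ℕ) :
    ∃ y ∈ wordBall S n, growth S n * ({x ∈ D | y * x ∈ D}).ncard ≤ D.ncard ^ 2 := by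
  classical
  have h1 : (1:G) ∈ wordBall S n := ⟨[], by simp⟩
  by_cases hB : (wordBall S n).Finite
  · set B := hB.toFinset with hBdef
    have hBne : B.Nonempty := ⟨1, hB.mem_toFinset.2 h1⟩
    set Df := hDfin.toFinset with hDfdef
    set f : G → ℕ := fun y => (Df.filter (fun x => y * x ∈ Df)).card with hf
    have hsum : ∑ y ∈ B, f y ≤ Df.card ^ 2 := by
      rw [← Finset.card_sigma]
      calc (B.sigma (fun y => Df.filter (fun x => y * x ∈ Df))).card
          ≤ (Df ×ˢ Df).card := by
            apply Finset.card_le_card_of_injOn (fun p => (p.1 * p.2, p.2))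
            · intro p hp
              rw [Finset.mem_coe, Finset.mem_sigma] at hp
              rw [Finset.mem_filter] at hp
              simp [Finset.mem_product, hp.2.1, hp.2.2]
            · intro p hp q hq hpq
              simp only [Prod.mk.injEq] at hpq
              obtain ⟨h1', h2'⟩ := hpq
              have : p.1 = q.1 := by
                have := h1'
                rw [h2'] at this
                exact mul_right_cancel this
              exact Sigma.ext this (by rw [h2'])
        _ = Df.card ^ 2 := by rw [Finset.card_product, sq]
    obtain ⟨y, hy, hmin⟩ := B.exists_min_image f hBne
    refine ⟨y, hB.mem_toFinset.1 hy, ?_⟩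
    have hset : {x ∈ D | y * x ∈ D} = ↑(Df.filter (fun x => y * x ∈ Df)) := by
      ext x
      simp [hDfdef, hDfin.mem_toFinset]
    have hgrowth : growth S n = B.card := by
      exact Set.ncard_eq_toFinset_card _ hB
    have hDcard : D.ncard = Df.card := Set.ncard_eq_toFinset_card D hDfin
    rw [hset, Set.ncard_coe_finset, hgrowth, hDcard]
    calc B.card * f y ≤ ∑ z ∈ B, f z := by
          have := Finset.card_nsmul_le_sum B f (f y) (fun i hi => hmin i hi)
          simpa using this
      _ ≤ Df.card ^ 2 := hsum
  · refine ⟨1, h1, ?_⟩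
    rw [growth, Set.Infinite.ncard hB]
    simp
end

section
/- Let n = φ_S(λ·Card(D)) where 1 < λ ≤ Card(Γ)/Card(D). Then there exists y ∈ B_S(n) with Card(y⁻¹D ∩ D) ≤ Card(D)/λ. -/
open Set Filter

section Aux

open Pointwise

variable {G : Type*} [Group G] (S : Set G)

lemma one_mem_wordBall (n : ℕ) : (1 : G) ∈ wordBall S n :=
  ⟨[], by simp⟩

lemma wordBall_mono {m n : ℕ} (h : m ≤ n) : wordBall S m ⊆ wordBall S n := by
  rintro x ⟨l, hl, hs, hp⟩
  exact ⟨l, hl.trans h, hs, hp⟩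

lemma wordBall_zero : wordBall S 0 = ({1} : Set G) := by
  ext x
  constructor
  · rintro ⟨l, hl, -, rfl⟩
    simp [List.length_eq_zero_iff.mp (Nat.le_zero.mp hl)]
  · rintro rfl
    exact one_mem_wordBall S 0

lemma wordBall_succ (n : ℕ) :
    wordBall S (n + 1) = wordBall S n ∪ S * wordBall S n := by
  ext x
  constructor
  · rintro ⟨l, hl, hs, rfl⟩
    cases l with
    | nil => exact Or.inl ⟨[], by simp⟩
    | cons a t =>
      refine Or.inr ⟨a, hs a (by simp), t.prod,
        ⟨t, by simpa using hl, fun s hs' => hs s (by simp [hs']), rfl⟩, by simp⟩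
  · rintro (⟨l, hl, hs, rfl⟩ | ⟨a, ha, y, ⟨l, hl, hs, rfl⟩, rfl⟩)
    · exact ⟨l, hl.trans n.le_succ, hs, rfl⟩
    · refine ⟨a :: l, by simpa using hl, ?_, by simp⟩
      intro s hs'
      rcases List.mem_cons.mp hs' with rfl | h
      · exact ha
      · exact hs s h

lemma wordBall_finite (hS : S.Finite) : ∀ n, (wordBall S n).Finite
  | 0 => by rw [wordBall_zero]; exact Set.finite_singleton 1
  | (n + 1) => by
      rw [wordBall_succ]
      exact (wordBall_finite hS n).union (hS.mul (wordBall_finite hS n))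

lemma mul_mem_wordBall {m n : ℕ} {x y : G} (hx : x ∈ wordBall S m)
    (hy : y ∈ wordBall S n) : x * y ∈ wordBall S (m + n) := by
  obtain ⟨l, hl, hs, rfl⟩ := hx
  obtain ⟨l', hl', hs', rfl⟩ := hy
  refine ⟨l ++ l', ?_, ?_, by simp⟩
  · simpa using Nat.add_le_add hl hl'
  · intro s hs''
    rcases List.mem_append.mp hs'' with h | h
    · exact hs s h
    · exact hs' s h

lemma inv_mem_wordBall (hSsym : ∀ s ∈ S, s⁻¹ ∈ S) {n : ℕ} {x : G}
    (hx : x ∈ wordBall S n) : x⁻¹ ∈ wordBall S n := by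
  obtain ⟨l, hl, hs, rfl⟩ := hx
  refine ⟨(l.map fun a => a⁻¹).reverse, by simpa using hl, ?_,
    (List.prod_inv_reverse l).symm⟩
  intro s hs'
  simp only [List.mem_reverse, List.mem_map] at hs'
  obtain ⟨a, ha, rfl⟩ := hs'
  exact hSsym a (hs a ha)

lemma exists_mem_wordBall (hSsym : ∀ s ∈ S, s⁻¹ ∈ S)
    (hSgen : Subgroup.closure S = ⊤) (x : G) : ∃ n, x ∈ wordBall S n := by
  have hx : x ∈ Subgroup.closure S := hSgen ▸ Subgroup.mem_top x
  induction hx using Subgroup.closure_induction with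
  | mem s hs => exact ⟨1, ⟨[s], by simp, by simpa using hs, by simp⟩⟩
  | one => exact ⟨0, one_mem_wordBall S 0⟩
  | mul a b _ _ iha ihb =>
      obtain ⟨m, hm⟩ := iha
      obtain ⟨n, hn⟩ := ihb
      exact ⟨m + n, mul_mem_wordBall S hm hn⟩
  | inv a _ iha =>
      obtain ⟨n, hn⟩ := iha
      exact ⟨n, inv_mem_wordBall S hSsym hn⟩

lemma exists_growth_ge (hSfin : S.Finite) (hSsym : ∀ s ∈ S, s⁻¹ ∈ S)
    (hSgen : Subgroup.closure S = ⊤) (t : ℝ)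
    (ht : Finite G → t ≤ (Nat.card G : ℝ)) : ∃ n, t ≤ (growth S n : ℝ) := by
  by_cases hG : Finite G
  · choose f hf using exists_mem_wordBall S hSsym hSgen
    obtain ⟨N, hN⟩ := Finite.exists_le f
    have huniv : wordBall S N = Set.univ :=
      Set.eq_univ_of_forall fun x => wordBall_mono S (hN x) (hf x)
    refine ⟨N, ?_⟩
    rw [growth, huniv, Set.ncard_univ]
    exact ht hG
  · have hgrow : ∀ n, n + 1 ≤ growth S n := by
      intro n
      induction n with
      | zero => simp [growth, wordBall_zero]
      | succ n ih =>
        have hss : wordBall S n ⊂ wordBall S (n + 1) := by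
          refine ⟨wordBall_mono S n.le_succ, fun hsub => ?_⟩
          have heq : wordBall S (n + 1) = wordBall S n :=
            subset_antisymm hsub (wordBall_mono S n.le_succ)
          have hall : ∀ m, wordBall S (n + m) = wordBall S n := by
            intro m
            induction m with
            | zero => rfl
            | succ m ihm =>
              have : n + (m + 1) = (n + m) + 1 := by ring
              rw [this, wordBall_succ, ihm, ← wordBall_succ, heq]
          have : Set.univ ⊆ wordBall S n := by
            intro x _
            obtain ⟨k, hk⟩ := exists_mem_wordBall S hSsym hSgen x
            have := wordBall_mono S (Nat.le_add_left k n) hk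
            rwa [hall k] at this
          have : (Set.univ : Set G).Finite :=
            (wordBall_finite S hSfin n).subset this
          exact hG (Set.finite_univ_iff.mp this)
        have hlt : growth S n < growth S (n + 1) :=
          Set.ncard_lt_ncard hss (wordBall_finite S hSfin (n + 1))
        omega
    refine ⟨⌈t⌉₊, (Nat.le_ceil t).trans ?_⟩
    exact_mod_cast (Nat.le_succ _).trans (hgrow ⌈t⌉₊)

end Aux

theorem stmt_3 {G : Type*} [Group G] (S : Set G) (hSfin : S.Finite)
    (hSsym : ∀ s ∈ S, s⁻¹ ∈ S) (hSgen : Subgroup.closure S = ⊤)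
    (D : Set G) (hDfin : D.Finite) (hDne : D.Nonempty)
    (lam : ℝ) (hlam : 1 < lam)
    (hcard : Finite G → lam * (D.ncard : ℝ) ≤ (Nat.card G : ℝ)) :
    ∃ y ∈ wordBall S (phiS S (lam * (D.ncard : ℝ))),
      (({x ∈ D | y * x ∈ D}).ncard : ℝ) ≤ (D.ncard : ℝ) / lam := by
  classical
  set t : ℝ := lam * (D.ncard : ℝ) with ht
  have hlam0 : (0 : ℝ) < lam := lt_trans one_pos hlam
  have hDnc : 0 < (D.ncard : ℝ) := by
    exact_mod_cast (Set.ncard_pos hDfin).mpr hDne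
  have hne : {n | t ≤ (growth S n : ℝ)}.Nonempty :=
    exists_growth_ge S hSfin hSsym hSgen t hcard
  set N := phiS S t with hNdef
  have hN : t ≤ (growth S N : ℝ) := Nat.sInf_mem hne
  have hBfin : (wordBall S N).Finite := wordBall_finite S hSfin N
  set Bf := hBfin.toFinset with hBf
  set Df := hDfin.toFinset with hDf
  have hBcard : (growth S N : ℝ) = (Bf.card : ℝ) := by
    rw [growth, Set.ncard_eq_toFinset_card _ hBfin]
  have hDcard : (D.ncard : ℝ) = (Df.card : ℝ) := by
    rw [Set.ncard_eq_toFinset_card _ hDfin]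
  by_contra hcon
  push_neg at hcon
  have hset : ∀ y : G, {x ∈ D | y * x ∈ D} = ↑(Df.filter fun x => y * x ∈ D) := by
    intro y
    ext x
    simp [hDf, Set.Finite.mem_toFinset]
  -- double counting
  have hsum : ∑ y ∈ Bf, (Df.filter fun x => y * x ∈ D).card ≤ Df.card * Df.card := by
    have hswap : ∑ y ∈ Bf, (Df.filter fun x => y * x ∈ D).card
        = ∑ x ∈ Df, (Bf.filter fun y => y * x ∈ D).card := by
      simp_rw [Finset.card_filter]
      exact Finset.sum_comm
    rw [hswap]
    have hfib : ∀ x ∈ Df, (Bf.filter fun y => y * x ∈ D).card ≤ Df.card := by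
      intro x _
      apply Finset.card_le_card_of_injOn (fun y => y * x)
      · intro y hy
        simp only [Finset.mem_coe, Finset.mem_filter] at hy
        simpa [hDf, Set.Finite.mem_toFinset] using hy.2
      · intro a _ b _ hab
        exact mul_right_cancel hab
    calc ∑ x ∈ Df, (Bf.filter fun y => y * x ∈ D).card
        ≤ ∑ _x ∈ Df, Df.card := Finset.sum_le_sum hfib
      _ = Df.card * Df.card := by rw [Finset.sum_const, smul_eq_mul]
  have hBne : Bf.Nonempty := ⟨1, by
    simp only [hBf, Set.Finite.mem_toFinset]
    exact one_mem_wordBall S N⟩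
  have hlt : (Bf.card : ℝ) * ((D.ncard : ℝ) / lam)
      < ∑ y ∈ Bf, ((Df.filter fun x => y * x ∈ D).card : ℝ) := by
    have := Finset.sum_lt_sum_of_nonempty hBne (f := fun _ => (D.ncard : ℝ) / lam)
      (g := fun y => ((Df.filter fun x => y * x ∈ D).card : ℝ)) ?_
    · simpa [Finset.sum_const, nsmul_eq_mul] using this
    · intro y hy
      have hy' : y ∈ wordBall S N := by
        simpa [hBf, Set.Finite.mem_toFinset] using hy
      have := hcon y hy'
      rwa [hset y, Set.ncard_coe_finset] at this
  have h2 : ∑ y ∈ Bf, ((Df.filter fun x => y * x ∈ D).card : ℝ)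
      ≤ (D.ncard : ℝ) * (D.ncard : ℝ) := by
    rw [hDcard]
    exact_mod_cast hsum
  have h3 : lam * (D.ncard : ℝ) ≤ (Bf.card : ℝ) := by
    rw [← hBcard]; exact hN
  have hdivpos : 0 < (D.ncard : ℝ) / lam := div_pos hDnc hlam0
  have h4 : lam * (D.ncard : ℝ) * ((D.ncard : ℝ) / lam)
      ≤ (Bf.card : ℝ) * ((D.ncard : ℝ) / lam) :=
    mul_le_mul_of_nonneg_right h3 hdivpos.le
  have h5 : lam * (D.ncard : ℝ) * ((D.ncard : ℝ) / lam)
      = (D.ncard : ℝ) * (D.ncard : ℝ) := by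
    field_simp
  linarith
end

section
/- Let 0 < α ≤ 1, C > 0. For v ≥ (C/α)e^{(α−1)/α}, the unique solution λ(v) ≥ α of α·log(λv/C) = λ − 1 is given by λ(v) = −α·W₋₁(−C·e^{−1/α}/(α·v)), where W₋₁ is the branch of the Lambert W function mapping [−1/e, 0) to (−∞, −1]. -/
open Set Filter

lemma weStrictAnti : StrictAntiOn (fun w : ℝ => w * Real.exp w) (Iic (-1)) := by
  apply strictAntiOn_of_deriv_neg (convex_Iic _)
  · exact (continuous_id.mul Real.continuous_exp).continuousOn
  · intro w hw
    rw [interior_Iic] at hw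
    have h : HasDerivAt (fun w : ℝ => w * Real.exp w) (1 * Real.exp w + w * Real.exp w) w :=
      (hasDerivAt_id w).mul (Real.hasDerivAt_exp w)
    rw [h.deriv]
    have : Real.exp w > 0 := Real.exp_pos w
    nlinarith [hw.out]

theorem stmt_18 (α C : ℝ) (hα : 0 < α) (hα1 : α ≤ 1) (hC : 0 < C)
    (W : ℝ → ℝ)
    (hW : ∀ x ∈ Ico (-(Real.exp 1)⁻¹) (0 : ℝ),
      W x ≤ -1 ∧ W x * Real.exp (W x) = x)
    (v lam : ℝ) (hv : (C / α) * Real.exp ((α - 1) / α) ≤ v)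
    (hlam : α ≤ lam) (heq : α * Real.log (lam * v / C) = lam - 1) :
    lam = -α * W (-(C * Real.exp (-α⁻¹)) / (α * v)) := by
  set x : ℝ := -(C * Real.exp (-α⁻¹)) / (α * v) with hx
  have hv0 : 0 < v :=
    lt_of_lt_of_le (by positivity) hv
  have hαv : 0 < α * v := by positivity
  have hxneg : x < 0 := by
    rw [hx]
    apply div_neg_of_neg_of_pos _ hαv
    nlinarith [Real.exp_pos (-α⁻¹)]
  have hxge : -(Real.exp 1)⁻¹ ≤ x := by
    rw [hx, neg_div, neg_le_neg_iff, div_le_iff₀ hαv, ← Real.exp_neg]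
    have h1 : (α - 1)/α = 1 - α⁻¹ := by field_simp
    have := mul_le_mul_of_nonneg_left hv (le_of_lt hα)
    rw [← mul_assoc, mul_div_cancel₀ _ (ne_of_gt hα)] at this
    calc C * Real.exp (-α⁻¹) = (C * Real.exp ((α-1)/α)) * Real.exp (-1) := by
          rw [h1, mul_assoc, ← Real.exp_add]; ring_nf
      _ ≤ (α * v) * Real.exp (-1) := by
          apply mul_le_mul_of_nonneg_right _ (Real.exp_pos _).le
          linarith [this]
      _ = Real.exp (-1) * (α * v) := by ring
  obtain ⟨hW1, hW2⟩ := hW x ⟨hxge, hxneg⟩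
  have hlam0 : 0 < lam := lt_of_lt_of_le hα hlam
  have hq : 0 < lam * v / C := by positivity
  have hlog : Real.log (lam * v / C) = (lam - 1) / α := by
    field_simp
    linarith [heq]
  have hexp : lam * v / C = Real.exp ((lam - 1) / α) := by
    rw [← hlog, Real.exp_log hq]
  -- the candidate w := -lam/α
  have hw_le : -lam / α ≤ -1 := by
    rw [div_le_iff₀ hα]
    linarith
  have hw_eq : (-lam / α) * Real.exp (-lam / α) = x := by
    rw [hx]
    have h2 : Real.exp (-lam / α) = Real.exp (-α⁻¹) / Real.exp ((lam - 1)/α) := by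
      rw [← Real.exp_sub]
      congr 1
      field_simp
      ring
    rw [h2, ← hexp]
    field_simp
  have hinj := weStrictAnti.injOn hw_le hW1
  have : -lam / α = W x := hinj (by rw [hw_eq, hW2])
  field_simp at this
  linarith [this]
end
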